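/- Let ψ be a complex-valued additive character of G = ℤ/Nℤ whose order o = o(ψ) is divisible by p (so o | N and N/o is a positive integer), and let k ≥ 1. Then F_ψ(X̄_k) = (−1)^k · k! · [u^k]( (1 − u^{o})/(1 − u^{o/p}) )^{N/o} = (−1)^k · k! · [u^k]( Σ_{j=0}^{p−1} u^{j·o/p} )^{N/o}, where [u^k] denotes the coefficient of u^k in the polynomial (note that (1 − u^{o})/(1 − u^{o/p}) = 1 + u^{o/p} + u^{2o/p} + ⋯ + u^{(p−1)o/p}). -/

import Mathlib

open Finset

/-- `D`: the residues in `ℤ/Nℤ` not divisible by `p` (complement of the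
index-`p` subgroup `pG`). -/
def resD (p N : ℕ) [NeZero N] : Finset (ZMod N) :=
  Finset.univ.filter fun a => ¬ p ∣ a.val

/-- `s_D(ψ) = Σ_{a ∈ D} ψ(a)`. -/
noncomputable def sD (p N : ℕ) [NeZero N] (ψ : AddChar (ZMod N) ℂ) : ℂ :=
  ∑ a ∈ resD p N, ψ a


open Polynomial

lemma sumA {α : Type*} [DecidableEq α] [Fintype α] (s : Finset α) (f : α → ℂ) (k : ℕ) :
    (∑ x ∈ Finset.univ.filter (fun x : Fin k → α => (∀ i, x i ∈ s) ∧ Function.Injective x),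
      ∏ i, f (x i)) = (k.factorial : ℂ) * ∑ t ∈ s.powersetCard k, ∏ a ∈ t, f a := by
  classical
  rw [← Finset.sum_fiberwise_of_maps_to (g := fun x : Fin k → α => Finset.image x Finset.univ)
    (t := s.powersetCard k) ?_]
  · rw [Finset.mul_sum]
    refine Finset.sum_congr rfl fun t ht => ?_
    obtain ⟨hts, htc⟩ := Finset.mem_powersetCard.1 ht
    have h1 : ∀ x ∈ (Finset.univ.filter (fun x : Fin k → α =>
        (∀ i, x i ∈ s) ∧ Function.Injective x)).filter
        (fun x => Finset.image x Finset.univ = t), (∏ i, f (x i)) = ∏ a ∈ t, f a := by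
      intro x hx
      simp only [Finset.mem_filter, Finset.mem_univ, true_and] at hx
      rw [← hx.2, Finset.prod_image]
      intro a _ b _ h
      exact hx.1.2 h
    rw [Finset.sum_congr rfl h1, Finset.sum_const, nsmul_eq_mul]
    congr 1
    have hcard : ((Finset.univ.filter (fun x : Fin k → α =>
        (∀ i, x i ∈ s) ∧ Function.Injective x)).filter
        (fun x => Finset.image x Finset.univ = t)).card
        = (Finset.univ : Finset (Fin k ↪ {a // a ∈ t})).card := by
      refine Finset.card_bij'
        (i := fun x hx =>
          ⟨fun i => ⟨x i, by
            simp only [Finset.mem_filter, Finset.mem_univ, true_and] at hx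
            rw [← hx.2]; exact Finset.mem_image_of_mem x (Finset.mem_univ i)⟩,
           fun a b h => by
            simp only [Finset.mem_filter, Finset.mem_univ, true_and] at hx
            exact hx.1.2 (congrArg Subtype.val h)⟩)
        (j := fun e _ => fun i => (e i : α)) ?_ ?_ ?_ ?_
      · intro x hx; exact Finset.mem_univ _
      · intro e _
        simp only [Finset.mem_filter, Finset.mem_univ, true_and]
        refine ⟨⟨fun i => hts (e i).2, fun a b h => e.injective (Subtype.ext h)⟩, ?_⟩
        apply Finset.eq_of_subset_of_card_le
        · intro a ha
          obtain ⟨i, _, rfl⟩ := Finset.mem_image.1 ha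
          exact (e i).2
        · rw [htc, Finset.card_image_of_injective _ (fun a b h => e.injective (Subtype.ext h)),
            Finset.card_univ, Fintype.card_fin]
      · intro x hx; rfl
      · intro e _
        apply Function.Embedding.ext
        intro i; rfl
    rw [hcard, Finset.card_univ, Fintype.card_embedding_eq, Fintype.card_coe, htc,
      Fintype.card_fin, Nat.descFactorial_self]
  · intro x hx
    simp only [Finset.mem_filter, Finset.mem_univ, true_and] at hx
    rw [Finset.mem_powersetCard]
    constructor
    · intro a ha
      obtain ⟨i, _, rfl⟩ := Finset.mem_image.1 ha
      exact hx.1 i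
    · rw [Finset.card_image_of_injective _ hx.2, Finset.card_univ, Fintype.card_fin]


lemma prodRange {m : ℕ} (hm : 0 < m) {ζ : ℂ} (hζ : IsPrimitiveRoot ζ m) :
    ∏ t ∈ Finset.range m, (Polynomial.X - Polynomial.C (ζ ^ t)) = Polynomial.X ^ m - 1 := by
  have hinj : Set.InjOn (ζ ^ ·) (Finset.range m) := fun a ha b hb h =>
    hζ.pow_inj (Finset.mem_range.1 ha) (Finset.mem_range.1 hb) h
  have himg : (Finset.range m).image (ζ ^ ·) = nthRootsFinset m (1 : ℂ) := by
    apply Finset.eq_of_subset_of_card_le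
    · intro x hx
      obtain ⟨t, _, rfl⟩ := Finset.mem_image.1 hx
      exact (mem_nthRootsFinset hm 1).2 (by
        rw [← pow_mul, mul_comm, pow_mul, hζ.pow_eq_one, one_pow])
    · rw [hζ.card_nthRootsFinset, Finset.card_image_of_injOn hinj, Finset.card_range]
  rw [X_pow_sub_one_eq_prod hm hζ, ← himg, Finset.prod_image (fun a ha b hb h => hinj ha hb h)]

lemma prodL0 {m : ℕ} (hm : 0 < m) {ζ : ℂ} (hζ : IsPrimitiveRoot ζ m) :
    ∏ t ∈ Finset.range m, (1 - Polynomial.C (ζ ^ t) * Polynomial.X) = 1 - Polynomial.X ^ m := by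
  have hz : ζ ≠ 0 := fun h => by
    have := hζ.pow_eq_one
    rw [h, zero_pow hm.ne'] at this
    exact zero_ne_one this
  have hfac : ∀ t : ℕ, (1 - C (ζ ^ t) * X : ℂ[X]) = (-C (ζ ^ t)) * (X - C (ζ⁻¹ ^ t)) := by
    intro t
    have h1 : (ζ ^ t) * (ζ⁻¹ ^ t) = 1 := by
      rw [inv_pow, mul_inv_cancel₀ (pow_ne_zero _ hz)]
    have : (-C (ζ ^ t)) * (X - C (ζ⁻¹ ^ t) : ℂ[X])
        = - (C (ζ ^ t) * X) + C ((ζ ^ t) * (ζ⁻¹ ^ t)) := by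
      rw [map_mul]; ring
    rw [this, h1, map_one]; ring
  have hP : ((-1 : ℂ))^m * ∏ t ∈ Finset.range m, ζ ^ t = -1 := by
    have h0 := congrArg (Polynomial.eval 0) (prodRange hm hζ)
    simp only [eval_sub, eval_pow, eval_X, eval_one, eval_prod, eval_C,
      zero_pow hm.ne', zero_sub] at h0
    rw [Finset.prod_congr rfl (fun t (_ : t ∈ Finset.range m) =>
        (by ring : -ζ ^ t = (-1 : ℂ) * ζ ^ t)),
      Finset.prod_mul_distrib, Finset.prod_const, Finset.card_range] at h0
    exact h0
  calc ∏ t ∈ Finset.range m, (1 - C (ζ ^ t) * X : ℂ[X])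
      = ∏ t ∈ Finset.range m, ((-C (ζ ^ t)) * (X - C (ζ⁻¹ ^ t))) :=
        Finset.prod_congr rfl fun t _ => hfac t
    _ = (∏ t ∈ Finset.range m, (-C (ζ ^ t))) * ∏ t ∈ Finset.range m, (X - C (ζ⁻¹ ^ t)) :=
        Finset.prod_mul_distrib
    _ = C ((-1)^m * ∏ t ∈ Finset.range m, ζ ^ t) * (X ^ m - 1) := by
        rw [prodRange hm hζ.inv]
        congr 1
        rw [map_mul, map_pow, map_neg, map_one, map_prod]
        rw [Finset.prod_congr rfl (fun t (_ : t ∈ Finset.range m) =>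
          (by rw [neg_mul, one_mul] : (-C (ζ ^ t) : ℂ[X]) = (-1) * C (ζ ^ t))),
          Finset.prod_mul_distrib, Finset.prod_const, Finset.card_range]
    _ = 1 - X ^ m := by
        rw [hP, map_neg, map_one]; ring

lemma prodL1 {m c : ℕ} (hm : 0 < m) {ζ : ℂ} (hζ : IsPrimitiveRoot ζ m) :
    ∏ t ∈ Finset.range (m * c), (1 - Polynomial.C (ζ ^ t) * Polynomial.X)
      = (1 - Polynomial.X ^ m) ^ c := by
  induction c with
  | zero => simp
  | succ c ih =>
    rw [Nat.mul_succ, Finset.prod_range_add, ih, pow_succ]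
    congr 1
    rw [← prodL0 hm hζ]
    refine Finset.prod_congr rfl fun t _ => ?_
    congr 2
    rw [pow_add, pow_mul, hζ.pow_eq_one, one_pow, one_mul]

theorem key (p N k : ℕ) (hp : p.Prime) [NeZero N] (hpd : p ∣ N)
    (ψ : AddChar (ZMod N) ℂ) (hord : p ∣ orderOf ψ) :
    (∑ x ∈ Finset.univ.filter
        (fun x : Fin k → ZMod N =>
          (∀ i, x i ∈ resD p N) ∧ Function.Injective x),
      ∏ i, ψ (x i)) =
    (-1) ^ k * (Nat.factorial k : ℂ) *
      (((∑ j ∈ Finset.range p, Polynomial.X ^ (j * (orderOf ψ / p))) ^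
          (N / orderOf ψ) : Polynomial ℂ).coeff k) := by
  classical
  have hppos : 0 < p := hp.pos
  have hNpos : 0 < N := Nat.pos_of_ne_zero (NeZero.ne N)
  set ζ : ℂ := ψ 1 with hζdef
  have hψx : ∀ x : ZMod N, ψ x = ζ ^ x.val := by
    intro x
    conv_lhs => rw [← ZMod.natCast_rightInverse x]
    rw [show ((x.val : ℕ) : ZMod N) = x.val • (1 : ZMod N) by rw [nsmul_eq_mul, mul_one],
      AddChar.map_nsmul_eq_pow]
  have hζN : ζ ^ N = 1 := by
    rw [hζdef, ← AddChar.map_nsmul_eq_pow, nsmul_eq_mul, mul_one, ZMod.natCast_self,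
      AddChar.map_zero_eq_one]
  have hordeq : orderOf ψ = orderOf ζ := by
    rw [orderOf_eq_orderOf_iff]
    intro j
    constructor
    · intro h
      have := congrArg (fun χ : AddChar (ZMod N) ℂ => χ (1 : ZMod N)) h
      simpa using this
    · intro h
      ext x
      rw [AddChar.pow_apply, hψx, ← pow_mul, mul_comm, pow_mul, h, one_pow, AddChar.one_apply]
  rw [hordeq] at hord
  set o := orderOf ζ with hodef
  have ho_dvd : o ∣ N := orderOf_dvd_of_pow_eq_one hζN
  have ho_pos : 0 < o := Nat.pos_of_ne_zero (fun h => hNpos.ne' (Nat.eq_zero_of_zero_dvd (h ▸ ho_dvd)))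
  have hprim : IsPrimitiveRoot ζ o := IsPrimitiveRoot.orderOf ζ
  set q := o / p with hqdef
  set c := N / o with hcdef
  have hq_pos : 0 < q := Nat.div_pos (Nat.le_of_dvd ho_pos hord) hppos
  have hpq : p * q = o := Nat.mul_div_cancel' hord
  have hoc : o * c = N := Nat.mul_div_cancel' ho_dvd
  have hqc : q * c = N / p := by
    have h1 : p * (q * c) = N := by rw [← mul_assoc, hpq, hoc]
    rw [← h1, Nat.mul_div_cancel_left _ hppos]
  -- full product
  have hG : ∏ x : ZMod N, (1 - C (ψ x) * X : ℂ[X]) = (1 - X ^ o) ^ c := by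
    have h1 := prodL1 (c := c) ho_pos hprim
    rw [hoc] at h1
    rw [← h1]
    refine Finset.prod_nbij' (fun x : ZMod N => x.val) (fun t => (t : ZMod N))
      (fun a _ => Finset.mem_range.2 (ZMod.val_lt a)) (fun t _ => Finset.mem_univ _)
      (fun a _ => ZMod.natCast_rightInverse a)
      (fun t ht => ZMod.val_cast_of_lt (Finset.mem_range.1 ht))
      (fun a _ => by rw [hψx])
  -- multiples-of-p product
  have hprim' : IsPrimitiveRoot (ζ ^ p) q := by
    have h1 : orderOf (ζ ^ p) = q := by
      rw [orderOf_pow' ζ hppos.ne', ← hodef, Nat.gcd_eq_right hord]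
    exact h1 ▸ IsPrimitiveRoot.orderOf (ζ ^ p)
  have hH : ∏ x ∈ Finset.univ.filter (fun a : ZMod N => p ∣ a.val),
      (1 - C (ψ x) * X : ℂ[X]) = (1 - X ^ q) ^ c := by
    have h1 := prodL1 (c := c) hq_pos hprim'
    rw [hqc] at h1
    rw [← h1]
    refine Finset.prod_nbij' (fun a : ZMod N => a.val / p) (fun t => ((p * t : ℕ) : ZMod N))
      ?_ ?_ ?_ ?_ ?_
    · intro a ha
      exact Finset.mem_range.2 (Nat.div_lt_div_of_lt_of_dvd hpd (ZMod.val_lt a))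
    · intro t _
      simp only [Finset.mem_filter, Finset.mem_univ, true_and]
      rw [ZMod.val_natCast]
      exact (Nat.dvd_mod_iff hpd).2 ⟨t, rfl⟩
    · intro a ha
      simp only [Finset.mem_filter, Finset.mem_univ, true_and] at ha
      show (((p * (a.val / p) : ℕ)) : ZMod N) = a
      rw [Nat.mul_div_cancel' ha]
      exact ZMod.natCast_rightInverse a
    · intro t ht
      have h2 : p * t < N := by
        calc p * t < p * (N / p) := (Nat.mul_lt_mul_left hppos).2 (Finset.mem_range.1 ht)
          _ = N := Nat.mul_div_cancel' hpd
      show ((p * t : ℕ) : ZMod N).val / p = t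
      rw [ZMod.val_cast_of_lt h2, Nat.mul_div_cancel_left _ hppos]
    · intro a ha
      simp only [Finset.mem_filter, Finset.mem_univ, true_and] at ha
      rw [hψx]
      congr 2
      rw [← pow_mul, Nat.mul_div_cancel' ha]
  -- split the full product
  have hsplit : (∏ x ∈ Finset.univ.filter (fun a : ZMod N => p ∣ a.val),
        (1 - C (ψ x) * X : ℂ[X]))
      * ∏ x ∈ resD p N, (1 - C (ψ x) * X : ℂ[X]) = ∏ x : ZMod N, (1 - C (ψ x) * X : ℂ[X]) := by
    rw [resD]
    exact Finset.prod_filter_mul_prod_filter_not Finset.univ _ _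
  have hgeom : (1 - X ^ o : ℂ[X]) = (1 - X ^ q) * ∑ j ∈ Finset.range p, X ^ (j * q) := by
    have h2 : (∑ i ∈ Finset.range p, ((X : ℂ[X]) ^ q) ^ i) * ((X : ℂ[X]) ^ q - 1)
        = X ^ o - 1 := by rw [geom_sum_mul, ← pow_mul, mul_comm q p, hpq]
    rw [Finset.sum_congr rfl (fun j (_ : j ∈ Finset.range p) =>
      (by rw [mul_comm, pow_mul] : (X : ℂ[X]) ^ (j * q) = (X ^ q) ^ j))]
    linear_combination h2
  have hqX_ne : (1 - X ^ q : ℂ[X]) ≠ 0 := by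
    intro h
    have h3 := congrArg (fun r : ℂ[X] => r.coeff q) h
    simp only [coeff_sub, coeff_one, coeff_X_pow, coeff_zero, if_neg hq_pos.ne', if_pos rfl] at h3
    norm_num at h3
  have hDG : ∏ x ∈ resD p N, (1 - C (ψ x) * X : ℂ[X])
      = (∑ j ∈ Finset.range p, X ^ (j * q)) ^ c := by
    apply mul_left_cancel₀ (pow_ne_zero c hqX_ne)
    calc (1 - X ^ q : ℂ[X]) ^ c * ∏ x ∈ resD p N, (1 - C (ψ x) * X)
        = (∏ x ∈ Finset.univ.filter (fun a : ZMod N => p ∣ a.val), (1 - C (ψ x) * X))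
          * ∏ x ∈ resD p N, (1 - C (ψ x) * X) := by rw [hH]
      _ = ∏ x : ZMod N, (1 - C (ψ x) * X) := hsplit
      _ = (1 - X ^ o) ^ c := hG
      _ = ((1 - X ^ q) * ∑ j ∈ Finset.range p, X ^ (j * q)) ^ c := by rw [← hgeom]
      _ = (1 - X ^ q) ^ c * (∑ j ∈ Finset.range p, X ^ (j * q)) ^ c := mul_pow _ _ _
  have hcoeff : (((∑ j ∈ Finset.range p, X ^ (j * q)) ^ c : ℂ[X])).coeff k
      = (-1 : ℂ) ^ k * ∑ t ∈ (resD p N).powersetCard k, ∏ a ∈ t, ψ a := by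
    rw [← hDG,
      Finset.prod_congr rfl (fun x (_ : x ∈ resD p N) =>
        (by rw [map_neg]; ring : (1 - C (ψ x) * X : ℂ[X]) = C (-ψ x) * X + 1)),
      Finset.prod_add]
    simp only [Finset.prod_const_one, mul_one]
    rw [finset_sum_coeff,
      Finset.sum_congr rfl (fun t (ht : t ∈ (resD p N).powerset) => by
        rw [Finset.prod_mul_distrib, Finset.prod_const, ← map_prod, coeff_C_mul, coeff_X_pow,
          mul_ite, mul_one, mul_zero]),
      Finset.sum_congr rfl (fun t (ht : t ∈ (resD p N).powerset) => if_congr eq_comm rfl rfl),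
      ← Finset.sum_filter, ← Finset.powersetCard_eq_filter, Finset.mul_sum]
    refine Finset.sum_congr rfl fun t ht => ?_
    have htc : t.card = k := (Finset.mem_powersetCard.1 ht).2
    rw [Finset.prod_congr rfl (fun a (_ : a ∈ t) => (by ring : -ψ a = (-1 : ℂ) * ψ a)),
      Finset.prod_mul_distrib, Finset.prod_const, htc]
  rw [hordeq, ← hqdef, ← hcdef, hcoeff, sumA (resD p N) (fun a => ψ a) k]
  generalize (∑ t ∈ (resD p N).powersetCard k, ∏ a ∈ t, ψ a) = S
  have h1 : ((-1 : ℂ)) ^ k * (-1) ^ k = 1 := by rw [← mul_pow]; norm_num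
  linear_combination (-(Nat.factorial k : ℂ) * S) * h1

theorem stmt_19 (p n k : ℕ) (hp : p.Prime) (hp3 : 3 ≤ p) [NeZero (p * (n + 1))]
    (hk : 1 ≤ k) (ψ : AddChar (ZMod (p * (n + 1))) ℂ) (hord : p ∣ orderOf ψ) :
    (∑ x ∈ Finset.univ.filter
        (fun x : Fin k → ZMod (p * (n + 1)) =>
          (∀ i, x i ∈ resD p (p * (n + 1))) ∧ Function.Injective x),
      ∏ i, ψ (x i)) =
    (-1) ^ k * (Nat.factorial k : ℂ) *
      (((∑ j ∈ Finset.range p, Polynomial.X ^ (j * (orderOf ψ / p))) ^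
          (p * (n + 1) / orderOf ψ) : Polynomial ℂ).coeff k) := by
  exact key p (p * (n + 1)) k hp ⟨n + 1, rfl⟩ ψ hord
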